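/- arXiv:1301.4437 — 2 statements merged into one kernel-verified Lean document; each statement's English description precedes it below -/
import Mathlib

section
/- The complete elliptic integral of the first kind at the singular value k₋ = (√6-√2)/4 satisfies K(k₋) = (1/π)·2^(-7/3)·3^(1/4)·Γ(1/3)³. -/
open Real MeasureTheory

/-- The complete elliptic integral of the first kind,
`K(k) = ∫₀^{π/2} dθ / √(1 - k² sin²θ)`. -/
noncomputable def ellipticK (k : ℝ) : ℝ :=
  ∫ θ in (0:ℝ)..(π/2), 1 / Real.sqrt (1 - k^2 * Real.sin θ ^ 2)

-- helper: a/√A = b/√B from a²B = b²A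
lemma div_sqrt_eq {a b A B : ℝ} (ha : 0 ≤ a) (hb : 0 ≤ b) (hA : 0 < A) (hB : 0 < B)
    (h : a ^ 2 * B = b ^ 2 * A) : a / Real.sqrt A = b / Real.sqrt B := by
  rw [show a = Real.sqrt (a ^ 2) from (Real.sqrt_sq ha).symm,
      show b = Real.sqrt (b ^ 2) from (Real.sqrt_sq hb).symm,
      ← Real.sqrt_div (sq_nonneg a), ← Real.sqrt_div (sq_nonneg b)]
  congr 1
  field_simp
  linarith

-- real beta integral
lemma real_beta {a b : ℝ} (ha : 0 < a) (hb : 0 < b) :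
    ∫ x in (0:ℝ)..1, x ^ (a - 1) * (1 - x) ^ (b - 1) =
      Real.Gamma a * Real.Gamma b / Real.Gamma (a + b) := by
  have h := Complex.Gamma_mul_Gamma_eq_betaIntegral (s := (a:ℂ)) (t := (b:ℂ))
    (by simpa using ha) (by simpa using hb)
  have hbeta : Complex.betaIntegral (a:ℂ) (b:ℂ) =
      ((∫ x in (0:ℝ)..1, x ^ (a - 1) * (1 - x) ^ (b - 1) : ℝ) : ℂ) := by
    rw [Complex.betaIntegral, ← intervalIntegral.integral_ofReal]
    apply intervalIntegral.integral_congr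
    intro x hx
    rw [Set.uIcc_of_le (by norm_num : (0:ℝ) ≤ 1)] at hx
    simp only []
    rw [Complex.ofReal_mul, Complex.ofReal_cpow hx.1, Complex.ofReal_cpow (by linarith [hx.2] : (0:ℝ) ≤ 1 - x)]
    push_cast
    ring
  rw [hbeta, ← Complex.ofReal_add, Complex.Gamma_ofReal, Complex.Gamma_ofReal,
    Complex.Gamma_ofReal] at h
  have hG : Real.Gamma (a + b) ≠ 0 := (Real.Gamma_pos_of_pos (by linarith)).ne'
  have h' : Real.Gamma a * Real.Gamma b =
      Real.Gamma (a + b) * ∫ x in (0:ℝ)..1, x ^ (a - 1) * (1 - x) ^ (b - 1) := by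
    exact_mod_cast h
  rw [h']
  field_simp

lemma cubic_to_beta :
    (∫ x in Set.Ioi (1:ℝ), 1 / Real.sqrt (x ^ 3 - 1)) =
      (1/3) * ∫ x in (0:ℝ)..1, x ^ ((1:ℝ)/6 - 1) * (1 - x) ^ ((1:ℝ)/2 - 1) := by
  have himg : (fun u : ℝ => u ^ (-(1:ℝ)/3)) '' Set.Ioo 0 1 = Set.Ioi 1 := by
    ext y
    constructor
    · rintro ⟨u, ⟨hu0, hu1⟩, rfl⟩
      rw [Set.mem_Ioi, Real.one_lt_rpow_iff_of_pos hu0]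
      right
      exact ⟨hu1, by norm_num⟩
    · intro hy
      rw [Set.mem_Ioi] at hy
      have hy0 : (0:ℝ) < y := by linarith
      refine ⟨y ^ (-(3:ℝ)), ⟨Real.rpow_pos_of_pos hy0 _,
        Real.rpow_lt_one_of_one_lt_of_neg hy (by norm_num)⟩, ?_⟩
      show (y ^ (-(3:ℝ))) ^ (-(1:ℝ)/3) = y
      rw [← Real.rpow_mul hy0.le]
      norm_num
  have hderiv : ∀ u ∈ Set.Ioo (0:ℝ) 1,
      HasDerivWithinAt (fun u : ℝ => u ^ (-(1:ℝ)/3))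
        ((-(1:ℝ)/3) * u ^ (-(1:ℝ)/3 - 1)) (Set.Ioo 0 1) u := fun u hu =>
    (Real.hasDerivAt_rpow_const (Or.inl hu.1.ne')).hasDerivWithinAt
  have hinj : Set.InjOn (fun u : ℝ => u ^ (-(1:ℝ)/3)) (Set.Ioo 0 1) := by
    intro u1 h1 u2 h2 h
    have := congrArg (fun z : ℝ => z ^ (-(3:ℝ))) h
    simp only [← Real.rpow_natCast, ← Real.rpow_mul h1.1.le, ← Real.rpow_mul h2.1.le] at this
    norm_num at this
    exact this
  have := MeasureTheory.integral_image_eq_integral_abs_deriv_smul measurableSet_Ioo hderiv hinj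
    (fun x => 1 / Real.sqrt (x ^ 3 - 1))
  rw [himg] at this
  rw [this, intervalIntegral.integral_of_le (by norm_num : (0:ℝ) ≤ 1),
    MeasureTheory.integral_Ioc_eq_integral_Ioo, ← smul_eq_mul, ← MeasureTheory.integral_smul]
  apply MeasureTheory.setIntegral_congr_fun measurableSet_Ioo
  intro u hu
  obtain ⟨hu0, hu1⟩ := hu
  have h1u : (0:ℝ) < 1 - u := by linarith
  simp only [smul_eq_mul]
  have habs : |(-(1:ℝ)/3) * u ^ (-(1:ℝ)/3 - 1)| = (1/3) * u ^ (-(1:ℝ)/3 - 1) := by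
    rw [abs_mul, abs_of_nonneg (Real.rpow_pos_of_pos hu0 _).le]
    norm_num
  have hinv : (u ^ (-(1:ℝ)/3)) ^ 3 - 1 = (1 - u) / u := by
    rw [← Real.rpow_natCast (u ^ (-(1:ℝ)/3)) 3, ← Real.rpow_mul hu0.le]
    norm_num [Real.rpow_neg_one]
    field_simp
  have hne : ((1:ℝ) - u) ^ ((1:ℝ)/2) ≠ 0 := (Real.rpow_pos_of_pos h1u _).ne'
  have hne2 : u ^ ((1:ℝ)/2) ≠ 0 := (Real.rpow_pos_of_pos hu0 _).ne'
  rw [habs, hinv, Real.sqrt_div h1u.le, Real.sqrt_eq_rpow u, Real.sqrt_eq_rpow (1-u),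
    show (1:ℝ)/6 - 1 = (-(1:ℝ)/3 - 1) + 1/(2:ℝ) by norm_num,
    Real.rpow_add hu0,
    show (1:ℝ)/2 - 1 = -(1/(2:ℝ)) by norm_num,
    Real.rpow_neg (by linarith : (0:ℝ) ≤ 1 - u)]
  field_simp

lemma trig_to_cubic :
    (∫ x in Set.Ioi (1:ℝ), 1 / Real.sqrt (x ^ 3 - 1)) =
      (3:ℝ) ^ (-(1:ℝ)/4) *
        ∫ φ in Set.Ioo (0:ℝ) π, 1 / Real.sqrt (1 - (2 - Real.sqrt 3)/4 * Real.sin φ ^ 2) := by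
  set c := Real.sqrt 3 with hcdef
  have hc : c ^ 2 = 3 := Real.sq_sqrt (by norm_num)
  have hc1 : 1 < c := by nlinarith [Real.sqrt_nonneg 3]
  have hc0 : (0:ℝ) < c := by linarith
  have hc2 : c < 2 := by nlinarith
  set F : ℝ → ℝ := fun φ => 1 + c * ((1 + Real.cos φ) / (1 - Real.cos φ)) with hF
  have hcos : ∀ φ ∈ Set.Ioo (0:ℝ) π, -1 < Real.cos φ ∧ Real.cos φ < 1 := by
    intro φ hφ
    constructor
    · have := Real.cos_lt_cos_of_nonneg_of_le_pi hφ.1.le le_rfl hφ.2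
      simpa [Real.cos_pi] using this
    · have := Real.cos_lt_cos_of_nonneg_of_le_pi le_rfl (le_of_lt hφ.2) hφ.1
      simpa [Real.cos_zero] using this
  have hexp0 : ∀ u : ℝ, ((1-u) + c*(1+u))^3 - (1-u)^3 = 3*c*(1+u)*((2-c)*u^2+(2+c)) := by
    intro u
    linear_combination (c*(1+u)^3) * hc
  have hderiv : ∀ φ ∈ Set.Ioo (0:ℝ) π, HasDerivWithinAt F
      (-(2 * c * Real.sin φ / (1 - Real.cos φ)^2)) (Set.Ioo 0 π) φ := by
    intro φ hφ
    obtain ⟨h1, h2⟩ := hcos φ hφ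
    have hne : 1 - Real.cos φ ≠ 0 := by linarith
    have hnum : HasDerivAt (fun φ => 1 + Real.cos φ) (-Real.sin φ) φ :=
      (Real.hasDerivAt_cos φ).const_add 1
    have hden : HasDerivAt (fun φ => 1 - Real.cos φ) (Real.sin φ) φ := by
      simpa using (Real.hasDerivAt_cos φ).const_sub 1
    have hd := (((hnum.div hden hne).const_mul c).const_add 1)
    have heq : c * ((-Real.sin φ * (1 - Real.cos φ) - (1 + Real.cos φ) * Real.sin φ) /
        (1 - Real.cos φ) ^ 2) = -(2 * c * Real.sin φ / (1 - Real.cos φ)^2) := by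
      field_simp
      ring
    rw [heq] at hd
    exact hd.hasDerivWithinAt
  have hinj : Set.InjOn F (Set.Ioo 0 π) := by
    intro x hx y hy hxy
    obtain ⟨hx1, hx2⟩ := hcos x hx
    obtain ⟨hy1, hy2⟩ := hcos y hy
    have h1 : 1 - Real.cos x ≠ 0 := by linarith
    have h2 : 1 - Real.cos y ≠ 0 := by linarith
    have h : c * ((1 + Real.cos x) / (1 - Real.cos x)) = c * ((1 + Real.cos y) / (1 - Real.cos y)) := by
      have := hxy
      simp only [hF] at this
      linarith
    rw [mul_div_assoc', mul_div_assoc'] at h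
    have h3 := (div_eq_div_iff h1 h2).mp h
    have h4 : c * ((1 + Real.cos x)*(1 - Real.cos y)) = c * ((1 + Real.cos y)*(1 - Real.cos x)) := by
      linear_combination h3
    have h5 := mul_left_cancel₀ hc0.ne' h4
    exact Real.injOn_cos ⟨hx.1.le, hx.2.le⟩ ⟨hy.1.le, hy.2.le⟩ (by linear_combination h5 / 2)
  have himg : F '' Set.Ioo 0 π = Set.Ioi 1 := by
    ext y
    constructor
    · rintro ⟨φ, hφ, rfl⟩
      obtain ⟨h1, h2⟩ := hcos φ hφ
      have hpos : 0 < c * ((1 + Real.cos φ) / (1 - Real.cos φ)) :=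
        mul_pos hc0 (div_pos (by linarith) (by linarith))
      simp only [hF, Set.mem_Ioi]
      linarith
    · intro hy
      rw [Set.mem_Ioi] at hy
      set u := (y - 1 - c) / (y - 1 + c) with hu
      have hden : 0 < y - 1 + c := by linarith
      have hu1 : u < 1 := by rw [hu, div_lt_one hden]; linarith
      have hum : -1 < u := by rw [hu, lt_div_iff₀ hden]; linarith
      have hkey : c * (1 + u) = (y - 1) * (1 - u) := by
        rw [hu]
        field_simp
        ring
      refine ⟨Real.arccos u, ⟨Real.arccos_pos.mpr hu1, ?_⟩, ?_⟩
      · rcases lt_or_eq_of_le (Real.arccos_le_pi u) with h | h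
        · exact h
        · exfalso
          have := Real.cos_arccos hum.le hu1.le
          rw [h, Real.cos_pi] at this
          linarith
      · have hcu := Real.cos_arccos hum.le hu1.le
        simp only [hF, hcu]
        have hne : 1 - u ≠ 0 := by linarith
        have : c * ((1 + u) / (1 - u)) = y - 1 := by
          rw [mul_div_assoc', div_eq_iff hne]
          linarith [hkey]
        linarith [this]
  have hmain := MeasureTheory.integral_image_eq_integral_abs_deriv_smul measurableSet_Ioo hderiv
    hinj (fun x => 1 / Real.sqrt (x ^ 3 - 1))
  rw [himg] at hmain
  rw [hmain, show (3:ℝ) ^ (-(1:ℝ)/4) * (∫ φ in Set.Ioo (0:ℝ) π,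
      1 / Real.sqrt (1 - (2 - c)/4 * Real.sin φ ^ 2)) = (3:ℝ) ^ (-(1:ℝ)/4) •
      (∫ φ in Set.Ioo (0:ℝ) π, 1 / Real.sqrt (1 - (2 - c)/4 * Real.sin φ ^ 2))
      from rfl, ← MeasureTheory.integral_smul]
  apply MeasureTheory.setIntegral_congr_fun measurableSet_Ioo
  intro φ hφ
  obtain ⟨h1, h2⟩ := hcos φ hφ
  have hs : 0 < Real.sin φ := Real.sin_pos_of_pos_of_lt_pi hφ.1 hφ.2
  have h1c : (0:ℝ) < 1 - Real.cos φ := by linarith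
  have hF1 : 1 < F φ := by
    have hpos : 0 < c * ((1 + Real.cos φ) / (1 - Real.cos φ)) :=
      mul_pos hc0 (div_pos (by linarith) (by linarith))
    simp only [hF]
    linarith
  have hA : 0 < F φ ^ 3 - 1 := by
    have h3 : 0 < (F φ - 1) * (F φ^2 + F φ + 1) := mul_pos (by linarith) (by nlinarith)
    nlinarith [h3]
  have hB : 0 < 1 - (2 - c)/4 * Real.sin φ ^ 2 := by nlinarith [Real.sin_sq_le_one φ, sq_nonneg (Real.sin φ)]
  simp only [smul_eq_mul]
  rw [abs_neg, abs_of_nonneg (by positivity), mul_one_div, mul_one_div]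
  apply div_sqrt_eq (by positivity) (by positivity) hA hB
  have hb2 : ((3:ℝ) ^ (-(1:ℝ)/4)) ^ 2 = 1 / c := by
    rw [← Real.rpow_natCast ((3:ℝ) ^ (-(1:ℝ)/4)) 2, ← Real.rpow_mul (by norm_num : (0:ℝ) ≤ 3)]
    rw [hcdef, Real.sqrt_eq_rpow, one_div, ← Real.rpow_neg (by norm_num : (0:ℝ) ≤ 3)]
    norm_num
  have hexp : F φ ^ 3 - 1 = 3*c*(1 + Real.cos φ)*((2-c)*Real.cos φ^2+(2+c)) /
      (1 - Real.cos φ)^3 := by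
    have h0 := hexp0 (Real.cos φ)
    simp only [hF]
    field_simp
    linear_combination h0
  have hne : (1:ℝ) - Real.cos φ ≠ 0 := h1c.ne'
  have hpoly : (2*c*Real.sin φ)^2 * (1 - (2-c)/4*Real.sin φ^2)
      = 3*(1+Real.cos φ)*((2-c)*Real.cos φ^2+(2+c))*(1-Real.cos φ) := by
    linear_combination (4*c^2 - c^2*(2-c)*(Real.sin φ^2 + 1 - Real.cos φ^2)) * Real.sin_sq φ
      + (4*(1-Real.cos φ^2) - (2-c)*(1-Real.cos φ^2)^2) * hc
  rw [hb2, hexp, div_pow, div_mul_eq_mul_div, one_div_mul_eq_div, div_div,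
    div_eq_div_iff (by positivity) (by positivity)]
  linear_combination (c*(1-Real.cos φ)^3) * hpoly

lemma fold :
    (∫ φ in Set.Ioo (0:ℝ) π, 1 / Real.sqrt (1 - (2 - Real.sqrt 3)/4 * Real.sin φ ^ 2))
      = 2 * ∫ θ in (0:ℝ)..(π/2), 1 / Real.sqrt (1 - (2 - Real.sqrt 3)/4 * Real.sin θ ^ 2) := by
  have hc1 : 1 < Real.sqrt 3 := by
    nlinarith [Real.sq_sqrt (by norm_num : (0:ℝ) ≤ 3), Real.sqrt_nonneg 3]
  set f : ℝ → ℝ := fun θ => 1 / Real.sqrt (1 - (2 - Real.sqrt 3)/4 * Real.sin θ ^ 2) with hf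
  have hpos : ∀ θ:ℝ, 0 < 1 - (2 - Real.sqrt 3)/4 * Real.sin θ ^ 2 := by
    intro θ
    nlinarith [Real.sin_sq_le_one θ, sq_nonneg (Real.sin θ), hc1]
  have hcont : Continuous f := by
    apply Continuous.div continuous_const
    · exact (Real.continuous_sqrt.comp (by continuity))
    · intro x
      exact (Real.sqrt_pos.mpr (hpos x)).ne'
  have hint : ∀ a b : ℝ, IntervalIntegrable f volume a b := fun a b => hcont.intervalIntegrable a b
  have hsplit : (∫ φ in (0:ℝ)..π, f φ) = (∫ φ in (0:ℝ)..(π/2), f φ) + ∫ φ in (π/2:ℝ)..π, f φ :=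
    (intervalIntegral.integral_add_adjacent_intervals (hint 0 (π/2)) (hint (π/2) π)).symm
  have hrefl : (∫ φ in (π/2:ℝ)..π, f φ) = ∫ φ in (0:ℝ)..(π/2), f φ := by
    have h := intervalIntegral.integral_comp_sub_left (a := (0:ℝ)) (b := π/2) f π
    rw [sub_zero, show π - π/2 = π/2 by ring] at h
    rw [← h]
    apply intervalIntegral.integral_congr
    intro x hx
    simp only [hf, Real.sin_pi_sub]
  have hIoo : (∫ φ in Set.Ioo (0:ℝ) π, f φ) = ∫ φ in (0:ℝ)..π, f φ := by
    rw [intervalIntegral.integral_of_le Real.pi_pos.le,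
      MeasureTheory.integral_Ioc_eq_integral_Ioo]
  rw [hIoo, hsplit, hrefl]
  ring

/-- `K(k₋) = (1/π)·2^(-7/3)·3^(1/4)·Γ(1/3)³` for the singular value `k₋ = (√6-√2)/4`. -/
theorem ellipticK_singular_value_minus :
    ellipticK ((Real.sqrt 6 - Real.sqrt 2) / 4) =
      (1 / π) * (2:ℝ) ^ (-(7:ℝ)/3) * (3:ℝ) ^ ((1:ℝ)/4) * Real.Gamma (1/3) ^ 3 := by
  have hk : ((Real.sqrt 6 - Real.sqrt 2)/4)^2 = (2 - Real.sqrt 3)/4 := by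
    have h6 : Real.sqrt 6 ^ 2 = 6 := Real.sq_sqrt (by norm_num)
    have h2 : Real.sqrt 2 ^ 2 = 2 := Real.sq_sqrt (by norm_num)
    have h62 : Real.sqrt 6 * Real.sqrt 2 = 2 * Real.sqrt 3 := by
      rw [← Real.sqrt_mul (by norm_num : (0:ℝ) ≤ 6) 2, show (6*2:ℝ) = 2^2*3 by norm_num,
        Real.sqrt_mul (by positivity) 3, Real.sqrt_sq (by norm_num : (0:ℝ) ≤ 2)]
    nlinarith [h6, h2, h62]
  have h1 : ellipticK ((Real.sqrt 6 - Real.sqrt 2)/4)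
      = ∫ θ in (0:ℝ)..(π/2), 1 / Real.sqrt (1 - (2 - Real.sqrt 3)/4 * Real.sin θ ^ 2) := by
    rw [ellipticK]
    simp only [hk]
  -- combine the chain
  have hbeta := real_beta (a := 1/6) (b := 1/2) (by norm_num) (by norm_num)
  rw [show (1:ℝ)/6 + 1/2 = 2/3 by norm_num] at hbeta
  have hchain : (∫ x in Set.Ioi (1:ℝ), 1 / Real.sqrt (x ^ 3 - 1))
      = (1/3) * (Real.Gamma (1/6) * Real.Gamma (1/2) / Real.Gamma (2/3)) := by
    rw [cubic_to_beta, hbeta]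
  rw [trig_to_cubic, fold, ← h1] at hchain
  -- hchain : 3^(-1/4) * (2 * ellipticK k) = (1/3) * (Γ(1/6)Γ(1/2)/Γ(2/3))
  have hpow : (3:ℝ) ^ (-(1:ℝ)/4) * (3:ℝ) ^ ((1:ℝ)/4) = 1 := by
    rw [← Real.rpow_add (by norm_num : (0:ℝ) < 3)]
    norm_num
  have hK : ellipticK ((Real.sqrt 6 - Real.sqrt 2)/4)
      = (3:ℝ) ^ ((1:ℝ)/4) * (1/6) * (Real.Gamma (1/6) * Real.Gamma (1/2) / Real.Gamma (2/3)) := by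
    have h := congrArg (fun z => (3:ℝ) ^ ((1:ℝ)/4) * z / 2) hchain
    linear_combination h - ellipticK ((Real.sqrt 6 - Real.sqrt 2)/4) * hpow
  rw [hK, Real.Gamma_one_half_eq]
  have hG3 : 0 < Real.Gamma (1/3) := Real.Gamma_pos_of_pos (by norm_num)
  have hG23 : 0 < Real.Gamma (2/3) := Real.Gamma_pos_of_pos (by norm_num)
  have hdup := Real.Gamma_mul_Gamma_add_half (1/6)
  rw [show (1:ℝ)/6 + 1/2 = 2/3 by norm_num, show 2*((1:ℝ)/6) = 1/3 by norm_num,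
    show (1:ℝ) - 1/3 = 2/3 by norm_num] at hdup
  have hrefl := Real.Gamma_mul_Gamma_one_sub (1/3)
  rw [show (1:ℝ) - 1/3 = 2/3 by norm_num, show π * (1/3) = π/3 by ring,
    Real.sin_pi_div_three] at hrefl
  have h2pow : (2:ℝ) ^ ((2:ℝ)/3) = (2:ℝ) ^ (-(7:ℝ)/3) * 8 := by
    have h := Real.rpow_add (by norm_num : (0:ℝ) < 2) (-(7:ℝ)/3) 3
    rw [show (-(7:ℝ)/3 + 3) = (2:ℝ)/3 by norm_num] at h
    rw [h, show ((3:ℝ)) = ((3:ℕ):ℝ) by norm_num, Real.rpow_natCast]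
    norm_num
  have hππ : Real.sqrt π * Real.sqrt π = π := Real.mul_self_sqrt Real.pi_pos.le
  have h33 : Real.sqrt 3 * Real.sqrt 3 = 3 := Real.mul_self_sqrt (by norm_num)
  have h3pos : 0 < Real.sqrt 3 := Real.sqrt_pos.mpr (by norm_num)
  have e2 : Real.Gamma (2/3) = 2*π/(Real.sqrt 3 * Real.Gamma (1/3)) := by
    rw [eq_div_iff (by positivity)]
    have h' : Real.Gamma (1/3) * Real.Gamma (2/3) * (Real.sqrt 3/2) = π := by
      rw [hrefl]
      field_simp
    linear_combination 2 * h'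
  have e1 : Real.Gamma (1/6)
      = Real.Gamma (1/3) * (2:ℝ)^((2:ℝ)/3) * Real.sqrt π / Real.Gamma (2/3) := by
    rw [eq_div_iff hG23.ne']
    linear_combination hdup
  rw [e1, e2, h2pow]
  have hπ0 : π ≠ 0 := Real.pi_ne_zero
  field_simp
  ring_nf
  linear_combination (8*Real.sqrt 3^2) * hππ
    + (8*π) * h33
end

section
/- The derivative of the complete elliptic integral of the first kind satisfies K'(k) = E(k)/(k(1-k²)) - K(k)/k for 0 < k < 1. -/
open Real MeasureTheory

/-- Complete elliptic integral of the second kind. -/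
noncomputable def ellipticE (k : ℝ) : ℝ :=
  ∫ θ in (0:ℝ)..(π/2), Real.sqrt (1 - k^2 * Real.sin θ ^ 2)

lemma upos {x s : ℝ} (hx : |x| < 1) (hs : |s| ≤ 1) : 0 < 1 - x^2 * s^2 := by
  have h1 : x^2 < 1 := by nlinarith [sq_abs x, abs_nonneg x]
  have h2 : s^2 ≤ 1 := by nlinarith [sq_abs s, abs_nonneg s]
  nlinarith [sq_nonneg x, sq_nonneg s]

lemma upos' {x t : ℝ} (hx : |x| < 1) : 0 < 1 - x^2 * Real.sin t^2 :=
  upos hx (Real.abs_sin_le_one t)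

lemma hasDerivAt_inner {x s : ℝ} (h : 0 < 1 - x^2 * s^2) :
    HasDerivAt (fun y : ℝ => 1 / Real.sqrt (1 - y^2 * s^2))
      (x * s^2 / ((1 - x^2 * s^2) * Real.sqrt (1 - x^2 * s^2))) x := by
  have hu : HasDerivAt (fun y : ℝ => 1 - y^2 * s^2) (-(2*x*s^2)) x := by
    simpa using (((hasDerivAt_pow 2 x).mul_const (s^2)).const_sub 1)
  have hs0 : Real.sqrt (1 - x^2 * s^2) ≠ 0 := by positivity
  have hsq : HasDerivAt (fun y : ℝ => Real.sqrt (1 - y^2 * s^2))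
      ((-(2*x*s^2)) / (2 * Real.sqrt (1 - x^2 * s^2))) x := hu.sqrt h.ne'
  have hinv := hsq.inv hs0
  have hsqsq : Real.sqrt (1 - x^2*s^2) ^ 2 = 1 - x^2*s^2 := Real.sq_sqrt h.le
  have key : x * s^2 / ((1 - x^2 * s^2) * Real.sqrt (1 - x^2 * s^2)) =
      -((-(2*x*s^2)) / (2 * Real.sqrt (1 - x^2 * s^2))) / Real.sqrt (1 - x^2*s^2) ^ 2 := by
    rw [hsqsq]; field_simp
  rw [← key] at hinv
  simpa [one_div, Pi.inv_def] using hinv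

lemma hasDerivAt_p {k θ : ℝ} (h : 0 < 1 - k^2 * Real.sin θ^2) :
    HasDerivAt (fun t : ℝ => Real.sin t * Real.cos t / Real.sqrt (1 - k^2 * Real.sin t^2))
      ((Real.cos θ^2 - Real.sin θ^2) / Real.sqrt (1 - k^2 * Real.sin θ^2)
        + k^2 * Real.sin θ^2 * Real.cos θ^2
          / ((1 - k^2 * Real.sin θ^2) * Real.sqrt (1 - k^2 * Real.sin θ^2))) θ := by
  have hn : HasDerivAt (fun t : ℝ => Real.sin t * Real.cos t)
      (Real.cos θ * Real.cos θ + Real.sin θ * (-Real.sin θ)) θ :=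
    (Real.hasDerivAt_sin θ).mul (Real.hasDerivAt_cos θ)
  have hu : HasDerivAt (fun t : ℝ => 1 - k^2 * Real.sin t^2)
      (-(k^2 * (2 * Real.sin θ * Real.cos θ))) θ := by
    have h1 : HasDerivAt (fun t : ℝ => Real.sin t ^ 2)
        (2 * Real.sin θ * Real.cos θ) θ := by
      simpa [mul_comm, mul_assoc, mul_left_comm] using ((Real.hasDerivAt_sin θ).fun_pow 2)
    simpa using (h1.const_mul (k^2)).const_sub 1
  have hs0 : Real.sqrt (1 - k^2 * Real.sin θ^2) ≠ 0 := by positivity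
  have hv : HasDerivAt (fun t : ℝ => Real.sqrt (1 - k^2 * Real.sin t^2))
      ((-(k^2 * (2 * Real.sin θ * Real.cos θ))) / (2 * Real.sqrt (1 - k^2 * Real.sin θ^2))) θ :=
    hu.sqrt h.ne'
  have hd := hn.div hv hs0
  convert hd using 1
  · rfl
  · rfl
  · rfl
  set S := Real.sqrt (1 - k^2 * Real.sin θ^2) with hSdef
  have hS2 : S^2 = 1 - k^2 * Real.sin θ^2 := Real.sq_sqrt h.le
  have hS0 : S ≠ 0 := hs0
  rw [← hS2]
  field_simp
  ring

lemma key_identity {k θ : ℝ} (hk0 : 0 < k) (hk1 : k < 1)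
    (h : 0 < 1 - k^2 * Real.sin θ^2) :
    k * Real.sin θ^2 / ((1 - k^2 * Real.sin θ^2) * Real.sqrt (1 - k^2 * Real.sin θ^2)) =
      (Real.sqrt (1 - k^2 * Real.sin θ^2) / (k * (1 - k^2))
        - (1 / Real.sqrt (1 - k^2 * Real.sin θ^2)) / k)
      - (k / (1 - k^2)) *
        ((Real.cos θ^2 - Real.sin θ^2) / Real.sqrt (1 - k^2 * Real.sin θ^2)
          + k^2 * Real.sin θ^2 * Real.cos θ^2
            / ((1 - k^2 * Real.sin θ^2) * Real.sqrt (1 - k^2 * Real.sin θ^2))) := by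
  have hc : Real.cos θ^2 = 1 - Real.sin θ^2 := Real.cos_sq' θ
  have hk2 : (1 : ℝ) - k^2 ≠ 0 := by nlinarith
  set S := Real.sqrt (1 - k^2 * Real.sin θ^2) with hSdef
  have hS2 : S^2 = 1 - k^2 * Real.sin θ^2 := Real.sq_sqrt h.le
  have hS0 : S ≠ 0 := by positivity
  have hsin : Real.sin θ^2 = (1 - S^2) / k^2 := by
    rw [hS2]; field_simp; ring
  rw [hc, ← hS2, hsin]
  field_simp
  ring

lemma cont_u (x : ℝ) : Continuous (fun t : ℝ => 1 - x^2 * Real.sin t^2) :=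
  continuous_const.sub (continuous_const.mul (Real.continuous_sin.pow 2))

lemma cont_sqrtu (x : ℝ) : Continuous (fun t : ℝ => Real.sqrt (1 - x^2 * Real.sin t^2)) :=
  (cont_u x).sqrt

lemma cont_invsqrtu {x : ℝ} (hx : |x| < 1) :
    Continuous (fun t : ℝ => 1 / Real.sqrt (1 - x^2 * Real.sin t^2)) := by
  refine continuous_const.div (cont_sqrtu x) (fun t => ?_)
  exact (Real.sqrt_pos.mpr (upos' hx)).ne'

lemma cont_F' {x : ℝ} (hx : |x| < 1) :
    Continuous (fun t : ℝ =>
      x * Real.sin t^2 / ((1 - x^2 * Real.sin t^2) * Real.sqrt (1 - x^2 * Real.sin t^2))) := by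
  refine (continuous_const.mul (Real.continuous_sin.pow 2)).div
    ((cont_u x).mul (cont_sqrtu x)) (fun t => ?_)
  have h := upos' (t := t) hx
  positivity

/-- For `0 < k < 1`, `K'(k) = E(k)/(k(1-k²)) - K(k)/k`. -/
theorem hasDerivAt_ellipticK {k : ℝ} (hk0 : 0 < k) (hk1 : k < 1) :
    HasDerivAt ellipticK (ellipticE k / (k * (1 - k^2)) - ellipticK k / k) k := by
  set r : ℝ := (1 + k) / 2 with hrdef
  have hr1 : r < 1 := by rw [hrdef]; linarith
  have hr0 : 0 < r := by rw [hrdef]; linarith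
  set ε : ℝ := (1 - k) / 2 with hεdef
  have hε : 0 < ε := by rw [hεdef]; linarith
  have hball : ∀ x ∈ Metric.ball k ε, |x| < r := by
    intro x hx
    rw [Metric.mem_ball, Real.dist_eq] at hx
    rw [hrdef]
    cases abs_lt.mp hx with
    | intro h1 h2 =>
      rw [abs_lt]; constructor <;> [nlinarith; nlinarith]
  have hkr : |k| < r := by
    rw [abs_of_pos hk0, hrdef]; linarith
  have hk1' : |k| < 1 := lt_trans hkr hr1
  have hrr : (0:ℝ) < 1 - r^2 := by nlinarith
  -- differentiation under the integral sign
  have main := intervalIntegral.hasDerivAt_integral_of_dominated_loc_of_deriv_le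
    (μ := volume) (a := (0:ℝ)) (b := π/2)
    (F := fun x t => 1 / Real.sqrt (1 - x^2 * Real.sin t^2))
    (F' := fun x t => x * Real.sin t^2 /
      ((1 - x^2 * Real.sin t^2) * Real.sqrt (1 - x^2 * Real.sin t^2)))
    (bound := fun _ => r / ((1 - r^2) * Real.sqrt (1 - r^2)))
    (x₀ := k) (Metric.ball_mem_nhds k hε)
    (by
      filter_upwards [Metric.ball_mem_nhds k hε] with x hx
      exact ((cont_invsqrtu (lt_trans (hball x hx) hr1)).aestronglyMeasurable).restrict)
    ((cont_invsqrtu hk1').intervalIntegrable 0 (π/2))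
    ((cont_F' hk1').aestronglyMeasurable.restrict)
    (by
      refine Filter.Eventually.of_forall (fun t _ x hx => ?_)
      have hxr : |x| < r := hball x hx
      have hx1 : |x| < 1 := lt_trans hxr hr1
      have hu : 0 < 1 - x^2 * Real.sin t^2 := upos' hx1
      have hs : |Real.sin t| ≤ 1 := Real.abs_sin_le_one t
      rw [Real.norm_eq_abs, abs_div]
      have hden : 0 < (1 - x^2 * Real.sin t^2) * Real.sqrt (1 - x^2 * Real.sin t^2) := by
        positivity
      rw [abs_of_pos hden]
      have hs2 : Real.sin t ^ 2 ≤ 1 := Real.sin_sq_le_one t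
      apply div_le_div₀ hr0.le
      · have heq : |x * Real.sin t^2| = |x| * Real.sin t^2 := by
          rw [abs_mul, abs_of_nonneg (sq_nonneg (Real.sin t))]
        rw [heq]
        nlinarith [mul_le_of_le_one_right (abs_nonneg x) hs2]
      · positivity
      · have h1 : 1 - r^2 ≤ 1 - x^2 * Real.sin t^2 := by
          have hx2 : x^2 ≤ r^2 := by nlinarith [sq_abs x, abs_nonneg x]
          nlinarith [mul_le_of_le_one_right (sq_nonneg x) hs2]
        exact mul_le_mul h1 (Real.sqrt_le_sqrt h1) (Real.sqrt_nonneg _) hu.le)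
    (intervalIntegrable_const)
    (by
      refine Filter.Eventually.of_forall (fun t _ x hx => ?_)
      exact hasDerivAt_inner (upos (lt_trans (hball x hx) hr1) (Real.abs_sin_le_one t)))
  obtain ⟨-, hderiv⟩ := main
  have hKdef : ellipticK = fun x => ∫ t in (0:ℝ)..(π/2), 1 / Real.sqrt (1 - x^2 * Real.sin t^2) := rfl
  rw [← hKdef] at hderiv
  -- now compute the value of the derivative integral
  have hint_sqrt : IntervalIntegrable (fun t => Real.sqrt (1 - k^2 * Real.sin t^2))
      volume 0 (π/2) := (cont_sqrtu k).intervalIntegrable 0 (π/2)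
  have hint_inv : IntervalIntegrable (fun t => 1 / Real.sqrt (1 - k^2 * Real.sin t^2))
      volume 0 (π/2) := (cont_invsqrtu hk1').intervalIntegrable 0 (π/2)
  have hcontP' : Continuous (fun t : ℝ =>
      (Real.cos t^2 - Real.sin t^2) / Real.sqrt (1 - k^2 * Real.sin t^2)
        + k^2 * Real.sin t^2 * Real.cos t^2
          / ((1 - k^2 * Real.sin t^2) * Real.sqrt (1 - k^2 * Real.sin t^2))) := by
    have h1 : Continuous (fun t : ℝ =>
        (Real.cos t^2 - Real.sin t^2) / Real.sqrt (1 - k^2 * Real.sin t^2)) := by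
      refine ((Real.continuous_cos.pow 2).sub (Real.continuous_sin.pow 2)).div
        (cont_sqrtu k) (fun t => ?_)
      exact (Real.sqrt_pos.mpr (upos' hk1')).ne'
    have h2 : Continuous (fun t : ℝ => k^2 * Real.sin t^2 * Real.cos t^2
        / ((1 - k^2 * Real.sin t^2) * Real.sqrt (1 - k^2 * Real.sin t^2))) := by
      refine ((continuous_const.mul (Real.continuous_sin.pow 2)).mul
        (Real.continuous_cos.pow 2)).div ((cont_u k).mul (cont_sqrtu k)) (fun t => ?_)
      have h := upos' (t := t) (x := k) hk1'
      positivity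
    exact h1.add h2
  have hintP' : IntervalIntegrable (fun t : ℝ =>
      (Real.cos t^2 - Real.sin t^2) / Real.sqrt (1 - k^2 * Real.sin t^2)
        + k^2 * Real.sin t^2 * Real.cos t^2
          / ((1 - k^2 * Real.sin t^2) * Real.sqrt (1 - k^2 * Real.sin t^2)))
      volume 0 (π/2) := hcontP'.intervalIntegrable 0 (π/2)
  -- FTC : the integral of P' is zero
  have hP'zero : (∫ t in (0:ℝ)..(π/2),
      ((Real.cos t^2 - Real.sin t^2) / Real.sqrt (1 - k^2 * Real.sin t^2)
        + k^2 * Real.sin t^2 * Real.cos t^2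
          / ((1 - k^2 * Real.sin t^2) * Real.sqrt (1 - k^2 * Real.sin t^2)))) = 0 := by
    have := intervalIntegral.integral_eq_sub_of_hasDerivAt
      (f := fun t : ℝ => Real.sin t * Real.cos t / Real.sqrt (1 - k^2 * Real.sin t^2))
      (a := (0:ℝ)) (b := π/2)
      (fun t _ => hasDerivAt_p (upos' hk1')) hintP'
    rw [this]
    simp [Real.sin_zero, Real.cos_pi_div_two]
  -- rewrite the integrand using the key identity
  have hcongr : (∫ t in (0:ℝ)..(π/2), k * Real.sin t^2 /
      ((1 - k^2 * Real.sin t^2) * Real.sqrt (1 - k^2 * Real.sin t^2))) =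
      ∫ t in (0:ℝ)..(π/2),
        ((Real.sqrt (1 - k^2 * Real.sin t^2) / (k * (1 - k^2))
          - (1 / Real.sqrt (1 - k^2 * Real.sin t^2)) / k)
        - (k / (1 - k^2)) *
          ((Real.cos t^2 - Real.sin t^2) / Real.sqrt (1 - k^2 * Real.sin t^2)
            + k^2 * Real.sin t^2 * Real.cos t^2
              / ((1 - k^2 * Real.sin t^2) * Real.sqrt (1 - k^2 * Real.sin t^2)))) := by
    apply intervalIntegral.integral_congr
    intro t _
    exact key_identity hk0 hk1 (upos' hk1')
  have hval : (∫ t in (0:ℝ)..(π/2), k * Real.sin t^2 /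
      ((1 - k^2 * Real.sin t^2) * Real.sqrt (1 - k^2 * Real.sin t^2))) =
      ellipticE k / (k * (1 - k^2)) - ellipticK k / k := by
    rw [hcongr]
    rw [intervalIntegral.integral_sub
      ((hint_sqrt.div_const _).sub (hint_inv.div_const _))
      (hintP'.const_mul _)]
    rw [intervalIntegral.integral_const_mul, hP'zero, mul_zero, sub_zero]
    rw [intervalIntegral.integral_sub (hint_sqrt.div_const _) (hint_inv.div_const _)]
    rw [intervalIntegral.integral_div, intervalIntegral.integral_div]
    rfl
  rw [← hval]
  exact hderiv
end
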